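/- If A_i ≤ √(2e)·i^{7/4}/N^{3/4} + o(1) and j ≤ N^{1/8}, then choosing i* as the largest integer with A_{i*} < j/(2e) gives i* = O(j^{4/7}·N^{3/7}), and the 3-collision amplitude bound g(i*,j) ≤ (e·A_{i*}/j)^j + 2^{−N^{1/8}} is at most 2^{−j+1} + 2^{−N^{1/8}}. -/

import Mathlib

theorem three_collision_final_bound
    (N : ℝ) (hN : 2 ≤ N) (j : ℕ) (hj : 1 ≤ j) (hjN : (j : ℝ) ≤ N ^ ((1 : ℝ) / 8))
    (A : ℕ → ℝ) (hAnonneg : ∀ i, 0 ≤ A i) (hAmono : Monotone A)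
    (g : ℕ → ℕ → ℝ) (hgnonneg : ∀ i k, 0 ≤ g i k)
    (hgbound : ∀ i : ℕ, g i j ≤ (A i) ^ j / (Nat.factorial j : ℝ)
        + 2 ^ (-(N ^ ((1 : ℝ) / 8))))
    (i : ℕ) (hAi : A i ≤ (j : ℝ) / (2 * Real.exp 1)) :
    g i j ≤ 2 ^ (1 - (j : ℝ)) + 2 ^ (-(N ^ ((1 : ℝ) / 8))) := by
  have hepos : (0:ℝ) < Real.exp 1 := Real.exp_pos 1
  have hfpos : (0:ℝ) < (Nat.factorial j : ℝ) := by positivity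
  have hAj : A i ^ j ≤ ((j : ℝ) / (2 * Real.exp 1)) ^ j :=
    pow_le_pow_left₀ (hAnonneg i) hAi j
  have hfe : (j:ℝ) ^ j / (Nat.factorial j : ℝ) ≤ Real.exp j :=
    Real.pow_div_factorial_le_exp (x := (j:ℝ)) (by positivity) j
  have key : A i ^ j / (Nat.factorial j : ℝ) ≤ (1/2 : ℝ) ^ j := by
    have h1 : A i ^ j / (Nat.factorial j : ℝ)
        ≤ ((j : ℝ) / (2 * Real.exp 1)) ^ j / (Nat.factorial j : ℝ) := by
      gcongr
    have h2 : ((j : ℝ) / (2 * Real.exp 1)) ^ j / (Nat.factorial j : ℝ)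
        = ((j:ℝ) ^ j / (Nat.factorial j : ℝ)) / (2 * Real.exp 1) ^ j := by
      rw [div_pow]; ring
    have h3 : ((j:ℝ) ^ j / (Nat.factorial j : ℝ)) / (2 * Real.exp 1) ^ j
        ≤ Real.exp j / (2 * Real.exp 1) ^ j := by
      gcongr
    have h4 : Real.exp j / (2 * Real.exp 1) ^ j = (1/2 : ℝ) ^ j := by
      rw [mul_pow, ← Real.exp_nat_mul, mul_one]
      field_simp
      rw [← mul_pow]; norm_num
    calc A i ^ j / (Nat.factorial j : ℝ) ≤ _ := h1
      _ = _ := h2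
      _ ≤ _ := h3
      _ = _ := h4
  have hhalf : ((1/2 : ℝ)) ^ j ≤ (2:ℝ) ^ (1 - (j : ℝ)) := by
    have : ((1/2 : ℝ)) ^ j = (2:ℝ) ^ (-(j:ℝ)) := by
      rw [one_div, inv_pow, ← Real.rpow_natCast (2:ℝ) j,
        ← Real.rpow_neg (by norm_num)]
    rw [this]
    apply Real.rpow_le_rpow_of_exponent_le (by norm_num)
    linarith
  calc g i j ≤ A i ^ j / (Nat.factorial j : ℝ) + 2 ^ (-(N ^ ((1 : ℝ) / 8))) := hgbound i
    _ ≤ 2 ^ (1 - (j : ℝ)) + 2 ^ (-(N ^ ((1 : ℝ) / 8))) := by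
        gcongr
        exact key.trans hhalf
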